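/- Let ω ∈ Ω¹(a) with i_Rω = 0 and ω∧dω = 0, and define the 0-th differential ω△X := L_Xω = i_X(dω) + d(i_Xω) for a vector field X. For homogeneous f ∈ S(c) and X ∈ T(b) with b ≥ 1, define f·X := (b/(b+c))·fX, and on 1-forms define f·_{ω△} τ := (1/(b'+c−a))·[(b'−a)·fτ + df∧i_Rτ] for τ ∈ Ω¹(b') with b' > a (this is the ω△-action with κ(1) = 1). Then ω△ is linear for these actions: L_{f·X}(ω) = f·_{ω△}(L_Xω), i.e. (b/(b+c))·L_{fX}(ω) = (1/(b+c))·[b·f·L_Xω + df∧i_R(L_Xω)], where L_Xω ∈ Ω¹(a+b). -/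

import Mathlib

/-!
Common setup: a concrete model of the exterior algebra `Ω` of differential forms over
`S = ℂ[x₁,…,xₙ]`.  An element of `Ω` is encoded as a function assigning to each subset
`I ⊆ {1,…,n}` the polynomial coefficient of `dx_I = dx_{i₁} ∧ … ∧ dx_{i_r}` (indices in
increasing order).  The `r`-forms are the elements supported on subsets of cardinality `r`.
-/

open MvPolynomial

noncomputable section

/-- The polynomial ring `S = ℂ[x₁,…,xₙ]`. -/
abbrev S (n : ℕ) : Type := MvPolynomial (Fin n) ℂ

/-- The exterior algebra of differential forms over `S`: a form is given by its coefficient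
at each basis monomial `dx_I`, `I ⊆ {1,…,n}`. -/
abbrev Ω (n : ℕ) : Type := Finset (Fin n) → S n

variable {n : ℕ}

/-- The sign `(-1)^{#{(i,j) ∈ I × J : j < i}}` arising when reordering `dx_I ∧ dx_J`. -/
def sgnMerge (I J : Finset (Fin n)) : ℤ :=
  (-1) ^ (∑ i ∈ I, (J.filter (fun j => j < i)).card)

/-- Exterior (wedge) product of forms. -/
def wedge (μ τ : Ω n) : Ω n :=
  fun K => ∑ I ∈ K.powerset, (sgnMerge I (K \ I) : S n) * μ I * τ (K \ I)

/-- Contraction `i_X` with a vector field `X = Σ_k X_k ∂/∂x_k` (given by its components). -/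
def contr (X : Fin n → S n) (τ : Ω n) : Ω n :=
  fun J => ∑ k ∈ Jᶜ, ((-1 : S n) ^ (J.filter (fun j => j < k)).card) * X k * τ (insert k J)

/-- The exterior differential `d`. -/
def extd (τ : Ω n) : Ω n :=
  fun I => ∑ k ∈ I, ((-1 : S n) ^ (I.filter (fun j => j < k)).card) * pderiv k (τ (I.erase k))

/-- The radial vector field `R = Σ_k x_k ∂/∂x_k`. -/
def radial (n : ℕ) : Fin n → S n := fun k => X k

/-- The unit `1 ∈ Ω⁰`. -/
def oneForm (n : ℕ) : Ω n := fun I => if I = ∅ then 1 else 0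

/-- A polynomial regarded as a `0`-form. -/
def ofPoly (f : S n) : Ω n := fun I => if I = ∅ then f else 0

/-- The basic `1`-form `dx_k`. -/
def dx (k : Fin n) : Ω n := fun I => if I = {k} then 1 else 0

/-- `τ` is an `r`-form, i.e. `τ ∈ Ω^r`. -/
def IsForm (τ : Ω n) (r : ℕ) : Prop := ∀ I : Finset (Fin n), I.card ≠ r → τ I = 0

/-- `τ ∈ Ω^z` for an integer `z` (so `τ = 0` when `z < 0`). -/
def IsFormZ (τ : Ω n) (z : ℤ) : Prop := ∀ I : Finset (Fin n), (I.card : ℤ) ≠ z → τ I = 0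

/-- `τ ∈ Ω^r(b)`: an `r`-form, homogeneous of total degree `b`, where each `x_i` and each
`dx_i` has degree `1` (this is the grading by the Lie derivative along the radial field). -/
def IsHomogForm (τ : Ω n) (r b : ℕ) : Prop :=
  IsForm τ r ∧ ∀ (I : Finset (Fin n)) (m : Fin n →₀ ℕ),
    coeff m (τ I) ≠ 0 → (∑ i ∈ m.support, m i) + I.card = b

/-- The coordinate vector field `∂/∂x_k`. -/
def coordVF (n : ℕ) (k : Fin n) : Fin n → S n := fun j => if j = k then 1 else 0

/-- Contraction `i_L` with a vector valued differential form `L ∈ Ω^{q+1} ⊗_S T`,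
encoded by its components `L k ∈ Ω^{q+1}` with respect to the basis `∂/∂x_k` of `T`,
so `L = Σ_k (L k) ⊗ ∂/∂x_k` and `i_L τ = Σ_k (L k) ∧ i_{∂/∂x_k} τ`. -/
def vcontr (L : Fin n → Ω n) (τ : Ω n) : Ω n :=
  ∑ k : Fin n, wedge (L k) (contr (coordVF n k) τ)

/-- The Lie derivative `L_K = [i_K, d] = i_K ∘ d + (-1)^q d ∘ i_K` with respect to a vector
valued form `K ∈ Ω^q ⊗_S T` (here `i_K` has degree `q - 1` and `d` has degree `1`). -/
def lieD (q : ℤ) (K : Fin n → Ω n) (τ : Ω n) : Ω n :=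
  vcontr K (extd τ) + ((-1 : ℂ) ^ q) • extd (vcontr K τ)

/-- The identity vector valued `1`-form `Id = Σ_k dx_k ⊗ ∂/∂x_k ∈ Ω¹ ⊗_S T`. -/
def idVF (n : ℕ) : Fin n → Ω n := fun k => dx k

/-- `D : Ω → Ω` is a (ℂ-linear) derivation of degree `q`. -/
structure IsDerivationOfDegree (D : Ω n → Ω n) (q : ℤ) : Prop where
  map_add : ∀ μ τ : Ω n, D (μ + τ) = D μ + D τ
  map_smul : ∀ (a : ℂ) (τ : Ω n), D (a • τ) = a • D τ
  map_degree : ∀ (r : ℕ) (τ : Ω n), IsForm τ r → IsFormZ (D τ) ((r : ℤ) + q)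
  leibniz : ∀ (r : ℕ) (μ τ : Ω n), IsForm μ r →
    D (wedge μ τ) = wedge (D μ) τ + ((-1 : ℂ) ^ ((r : ℤ) * q)) • wedge μ (D τ)

/-- `D : Ω → Ω` is a differential operator of order `1` and degree `q`, i.e. a ℂ-linear
map of degree `q` with `[[D, λ_μ], λ_τ] = 0` for all `μ, τ ∈ Ω` (stated on homogeneous
`μ ∈ Ω^r`, `τ ∈ Ω^s`, with the graded commutator signs). -/
structure IsDiffOpOfDegree (D : Ω n → Ω n) (q : ℤ) : Prop where
  map_add : ∀ μ τ : Ω n, D (μ + τ) = D μ + D τ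
  map_smul : ∀ (a : ℂ) (τ : Ω n), D (a • τ) = a • D τ
  map_degree : ∀ (r : ℕ) (τ : Ω n), IsForm τ r → IsFormZ (D τ) ((r : ℤ) + q)
  order_one : ∀ (r s : ℕ) (μ τ : Ω n), IsForm μ r → IsForm τ s → ∀ σ : Ω n,
    D (wedge μ (wedge τ σ)) - ((-1 : ℂ) ^ (q * (r : ℤ))) • wedge μ (D (wedge τ σ)) -
      ((-1 : ℂ) ^ ((q + (r : ℤ)) * (s : ℤ))) •
        (wedge τ (D (wedge μ σ)) - ((-1 : ℂ) ^ (q * (r : ℤ))) • wedge τ (wedge μ (D σ))) = 0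

/-- The deformed action `f · τ = α(r,b,c)·fτ + β(r,b,c)·df ∧ i_R τ` of a homogeneous
polynomial `f ∈ S(c)` on `τ ∈ Ω^r(b)`, for given scalar families `α`, `β`. -/
def defAct (α β : ℕ → ℕ → ℕ → ℂ) (r b c : ℕ) (f : S n) (τ : Ω n) : Ω n :=
  α r b c • (f • τ) + β r b c • wedge (extd (ofPoly f)) (contr (radial n) τ)

/-- The differential operator `ω̃₁ ∧ L_Id + ω̃₂ ∧ i_Id + λ_μ̃`, evaluated on `τ ∈ Ω^r`:
`τ ↦ ω̃₁ ∧ dτ + r · ω̃₂ ∧ τ + μ̃ ∧ τ`. -/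
def opId (ω₁ ω₂ μ : Ω n) (r : ℕ) (τ : Ω n) : Ω n :=
  wedge ω₁ (extd τ) + (r : ℂ) • wedge ω₂ τ + wedge μ τ

/-- The quantity `b - a·(r/q + (-1)^q t)`. -/
def denomA (q a : ℕ) (t : ℂ) (r b : ℕ) : ℂ :=
  (b : ℂ) - (a : ℂ) * ((r : ℂ) / (q : ℂ) + (-1 : ℂ) ^ q * t)

/-- `α(r,b,c) = (b - a(r/q + (-1)^q t)) / (b + c - a(r/q + (-1)^q t))`. -/
def alphaA (q a : ℕ) (t : ℂ) (r b c : ℕ) : ℂ :=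
  denomA q a t r b / (denomA q a t r b + (c : ℂ))

/-- `β(r,b,c) = α(r,b,c) / (b - a(r/q + (-1)^q t))`. -/
def betaA (q a : ℕ) (t : ℂ) (r b c : ℕ) : ℂ :=
  alphaA q a t r b c / denomA q a t r b

/-- A linearizable differential operator
`D = ω₁ ∧ L_Id + ((1/q)dω₁ + ω₂) ∧ i_Id + (t·λ_{dω₁} + λ_μ)`, evaluated on `τ ∈ Ω^r`. -/
def linOp (q : ℕ) (t : ℂ) (ω₁ ω₂ μ : Ω n) (r : ℕ) (τ : Ω n) : Ω n :=
  wedge ω₁ (extd τ) + (r : ℂ) • wedge ((q : ℂ)⁻¹ • extd ω₁ + ω₂) τ +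
    wedge (t • extd ω₁ + μ) τ

/-- The deformed action linearizing the exterior differential:
`f ·_d τ = (b/(b+c))·(fτ + (1/b)·df ∧ i_R τ)`, with `f ·_d τ = fτ` when `b = 0`
(in particular when `b = c = 0`). -/
def dotdT (b c : ℕ) (f : S n) (τ : Ω n) : Ω n :=
  if b = 0 then f • τ
  else ((b : ℂ) / ((b : ℂ) + (c : ℂ))) •
    (f • τ + ((b : ℂ))⁻¹ • wedge (extd (ofPoly f)) (contr (radial n) τ))

/-- The deformed action linearizing the exterior differential:
`f ·_d τ = (b/(b+c))·(fτ + (1/b)·df ∧ i_R τ)`, with the usual product when `b = c = 0`. -/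
def dotd (b c : ℕ) (f : S n) (τ : Ω n) : Ω n :=
  if b = 0 ∧ c = 0 then f • τ
  else ((b : ℂ) / ((b : ℂ) + (c : ℂ))) •
    (f • τ + ((b : ℂ))⁻¹ • wedge (extd (ofPoly f)) (contr (radial n) τ))

/-- `κ(r) = (r+1)/2`. -/
def kapC (r : ℕ) : ℂ := ((r : ℂ) + 1) / 2

/-- The differential operator `ω△ : Ω^r → Ω^{r+2}`, `ω△τ = ω ∧ dτ + κ(r)·dω ∧ τ`. -/
def triOp (ω : Ω n) (r : ℕ) (τ : Ω n) : Ω n :=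
  wedge ω (extd τ) + kapC r • wedge (extd ω) τ

/-- The deformed action linearizing `ω△`:
`f ·_{ω△} τ = (1/(b+c-κ(r)a))·[(b-κ(r)a)·fτ + df ∧ i_R τ]`. -/
def triAct (a r b c : ℕ) (f : S n) (τ : Ω n) : Ω n :=
  ((b : ℂ) + (c : ℂ) - kapC r * (a : ℂ))⁻¹ •
    (((b : ℂ) - kapC r * (a : ℂ)) • (f • τ) + wedge (extd (ofPoly f)) (contr (radial n) τ))

/-- The Lie derivative `L_X ω = i_X (dω) + d (i_X ω)` along a vector field `X`. -/
def lieVF (X : Fin n → S n) (ω : Ω n) : Ω n := contr X (extd ω) + extd (contr X ω)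

end

section AuxLemmas

open MvPolynomial Finset

variable {n : ℕ}

private lemma euler_mono_aux (m : Fin n →₀ ℕ) (c : ℂ) (i : Fin n) :
    X i * pderiv i (monomial m c) = monomial m ((m i : ℂ) * c) := by
  rw [pderiv_monomial]
  by_cases h : m i = 0
  · simp [h]
  · rw [X, monomial_mul]
    have : Finsupp.single i 1 + (m - Finsupp.single i 1) = m :=
      add_tsub_cancel_of_le (Finsupp.single_le_iff.mpr (Nat.one_le_iff_ne_zero.mpr h))
    rw [this]
    ring_nf

private lemma euler_aux (p : S n) (d : ℕ) (hp : p.IsHomogeneous d) :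
    ∑ i : Fin n, X i * pderiv i p = (d : S n) * p := by
  have key : ∀ i, X i * pderiv i p = ∑ v ∈ p.support, monomial v ((v i : ℂ) * coeff v p) := by
    intro i
    conv_lhs => rw [p.as_sum]
    rw [map_sum (pderiv i), Finset.mul_sum]
    exact Finset.sum_congr rfl fun v _ => euler_mono_aux v _ i
  simp_rw [key]
  rw [Finset.sum_comm]
  conv_rhs => rw [p.as_sum]
  rw [Finset.mul_sum]
  refine Finset.sum_congr rfl fun v hv => ?_
  have hd : ∑ i ∈ v.support, v i = d := by
    have := hp (mem_support_iff.mp hv)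
    rw [show (Finsupp.weight 1 : (Fin n →₀ ℕ) →+ ℕ) v = ∑ i ∈ v.support, v i from (DFunLike.congr_fun Finsupp.degree_eq_weight_one v).symm] at this
    simpa [Finsupp.degree] using this
  have e1 : ∑ i : Fin n, monomial v ((v i : ℂ) * coeff v p)
      = monomial v ((∑ i : Fin n, (v i : ℂ)) * coeff v p) := by
    rw [Finset.sum_mul, map_sum]
  rw [e1]
  have hsum : (∑ i : Fin n, (v i : ℂ)) = (d : ℂ) := by
    rw [← hd]
    push_cast
    rw [Finset.sum_subset (Finset.subset_univ v.support)]
    intro x _ hx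
    simp [Finsupp.notMem_support_iff.mp hx]
  rw [hsum, show (d : S n) = C (d : ℂ) by simp, C_mul_monomial]

private lemma isHomog_of_aux (p : S n) (d : ℕ)
    (h : ∀ m, coeff m p ≠ 0 → ∑ i ∈ m.support, m i = d) : p.IsHomogeneous d := by
  intro m hm
  rw [show (Finsupp.weight 1 : (Fin n →₀ ℕ) →+ ℕ) = Finsupp.degree from Finsupp.degree_eq_weight_one.symm]
  exact h m hm

private lemma contr_oneform_aux (X : Fin n → S n) (τ : Ω n) (hτ : IsForm τ 1) :
    contr X τ = ofPoly (∑ k : Fin n, X k * τ {k}) := by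
  funext J
  by_cases h : J = (∅ : Finset (Fin n))
  · subst h
    simp [contr, ofPoly]
  · have : ofPoly (∑ k : Fin n, X k * τ {k}) J = 0 := by simp [ofPoly, h]
    rw [this, contr]
    refine Finset.sum_eq_zero fun k hk => ?_
    rw [hτ _ ?_, mul_zero]
    rw [Finset.card_insert_of_notMem (Finset.mem_compl.mp hk)]
    have : J.card ≠ 0 := by simpa [Finset.card_eq_zero] using h
    omega

private lemma contr_smul_aux (f : S n) (X : Fin n → S n) (τ : Ω n) :
    contr (f • X) τ = f • contr X τ := by
  funext J
  simp only [contr, Pi.smul_apply, smul_eq_mul, Finset.mul_sum]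
  exact Finset.sum_congr rfl fun k _ => by ring

private lemma smul_ofPoly_aux (f g : S n) : f • ofPoly g = ofPoly (f * g) := by
  funext I
  simp [ofPoly, mul_ite]

private lemma extd_ofPoly_mul_aux (p q : S n) :
    extd (ofPoly (p * q)) = p • extd (ofPoly q) + q • extd (ofPoly p) := by
  funext I
  simp only [extd, ofPoly, Pi.add_apply, Pi.smul_apply, smul_eq_mul, Finset.mul_sum,
    ← Finset.sum_add_distrib]
  refine Finset.sum_congr rfl fun k _ => ?_
  rw [apply_ite (pderiv k), apply_ite (pderiv k), apply_ite (pderiv k)]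
  split_ifs with h
  · rw [pderiv_mul]; ring
  · simp

private lemma wedge_ofPoly_aux (μ : Ω n) (h : S n) : wedge μ (ofPoly h) = h • μ := by
  funext K
  simp only [wedge, Pi.smul_apply, smul_eq_mul]
  rw [Finset.sum_eq_single K]
  · rw [Finset.sdiff_self]
    simp [sgnMerge, ofPoly]
    ring
  · intro I hI hne
    have : K \ I ≠ ∅ := fun hKI => hne (Finset.Subset.antisymm (Finset.mem_powerset.mp hI)
      (Finset.sdiff_eq_empty_iff_subset.mp hKI))
    simp [ofPoly, this]
  · intro h'
    exact absurd (Finset.mem_powerset_self K) h'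

private lemma isForm_extd_aux (τ : Ω n) (r : ℕ) (hτ : IsForm τ r) :
    IsForm (extd τ) (r + 1) := by
  intro I hI
  refine Finset.sum_eq_zero fun k hk => ?_
  rw [hτ _ ?_, map_zero, mul_zero]
  rw [Finset.card_erase_of_mem hk]
  have : I.card ≠ 0 := Finset.card_ne_zero_of_mem hk
  omega

private lemma isForm_contr_aux (X : Fin n → S n) (τ : Ω n) (r : ℕ) (hτ : IsForm τ (r + 1)) :
    IsForm (contr X τ) r := by
  intro J hJ
  refine Finset.sum_eq_zero fun k hk => ?_
  rw [hτ _ ?_, mul_zero]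
  rw [Finset.card_insert_of_notMem (Finset.mem_compl.mp hk)]
  omega

private lemma isForm_ofPoly_aux (g : S n) : IsForm (ofPoly g) 0 := by
  intro I hI
  have : I ≠ ∅ := by
    intro h; subst h; simp at hI
  simp [ofPoly, this]

private lemma extd_ofPoly_singleton_aux (g : S n) (k : Fin n) :
    extd (ofPoly g) {k} = pderiv k g := by
  simp [extd, ofPoly, Finset.filter_singleton]

private lemma extd_zero_aux : extd (0 : Ω n) = 0 := by
  funext I; simp [extd]

private lemma contr_zero_aux (X : Fin n → S n) : contr X (0 : Ω n) = 0 := by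
  funext J; simp [contr]

private lemma wedge_zero_aux (μ : Ω n) : wedge μ (0 : Ω n) = 0 := by
  funext K; simp [wedge]

private lemma pair_term_aux (ω : Ω n) (Y : Fin n → S n) (k l : Fin n) (h : l ≠ k) :
    ((-1 : S n) ^ (({k} : Finset (Fin n)).filter (fun j => j < l)).card) * Y l *
      extd ω (insert l {k}) = Y l * (pderiv l (ω {k}) - pderiv k (ω {l})) := by
  have hlk : l ∉ ({k} : Finset (Fin n)) := by simp [h]
  simp only [extd]
  rw [Finset.sum_insert hlk, Finset.sum_singleton, Finset.erase_insert hlk,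
    Finset.erase_insert_of_ne h, Finset.erase_singleton]
  rcases h.lt_or_gt with hlt | hlt
  · have h1 : ¬ k < l := not_lt_of_gt hlt
    simp only [Finset.filter_insert, Finset.filter_singleton, if_pos hlt, if_neg h1,
      if_neg (lt_irrefl l), if_neg (lt_irrefl k), insert_empty_eq,
      Finset.card_singleton, Finset.card_empty, pow_one, pow_zero]
    ring
  · have h1 : ¬ l < k := not_lt_of_gt hlt
    simp only [Finset.filter_insert, Finset.filter_singleton, if_pos hlt, if_neg h1,
      if_neg (lt_irrefl l), if_neg (lt_irrefl k), insert_empty_eq,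
      Finset.card_singleton, Finset.card_empty, pow_one, pow_zero]
    ring

end AuxLemmas

/-- Let `ω ∈ Ω¹(a)` with `i_Rω = 0`, `ω∧dω = 0`, and let
`ω△X = L_Xω = i_X(dω) + d(i_Xω)` be the 0-th differential of the regularity complex.
With the actions `f·X = (b/(b+c))·fX` on `T(b)` (`b ≥ 1`) and
`f ·_{ω△} τ = (1/(b'+c-a))·[(b'-a)·fτ + df∧i_Rτ]` on `Ω¹(b')` (the `ω△`-action with
`κ(1) = 1`; here `b' = a + b > a`), the operator `ω△` is linear:
`(b/(b+c))·L_{fX}(ω) = (1/(b+c))·[b·f·L_Xω + df∧i_R(L_Xω)]`. -/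
theorem triOp_zeroth_differential_linearized (n a b c : ℕ) (hb : 1 ≤ b) (ω : Ω n)
    (hω : IsHomogForm ω 1 a) (hrad : contr (radial n) ω = 0)
    (hint : wedge ω (extd ω) = 0) (f : S n) (hf : f.IsHomogeneous c)
    (Xv : Fin n → S n) (hX : ∀ k, (Xv k).IsHomogeneous (b + 1)) :
    ((b : ℂ) / ((b : ℂ) + (c : ℂ))) • lieVF (f • Xv) ω =
      ((b : ℂ) + (c : ℂ))⁻¹ •
        ((b : ℂ) • (f • lieVF Xv ω) +
          wedge (extd (ofPoly f)) (contr (radial n) (lieVF Xv ω))) := by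
  classical
  by_cases ha : a = 0
  · subst ha
    have hω0 : ω = 0 := by
      funext I
      by_cases hc : I.card = 1
      · refine MvPolynomial.ext _ _ fun m => ?_
        simp only [Pi.zero_apply, MvPolynomial.coeff_zero]
        by_contra hne
        have := hω.2 I m hne
        omega
      · exact hω.1 I hc
    subst hω0
    simp [lieVF, extd_zero_aux, contr_zero_aux, wedge_zero_aux]
  · obtain ⟨a', rfl⟩ : ∃ a', a = a' + 1 := ⟨a - 1, by omega⟩
    have hform : IsForm ω 1 := hω.1
    set g : S n := ∑ k : Fin n, Xv k * ω {k} with hg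
    have hωk : ∀ k : Fin n, (ω {k}).IsHomogeneous a' := by
      intro k
      refine isHomog_of_aux _ _ fun m hm => ?_
      have := hω.2 {k} m hm
      simp only [Finset.card_singleton] at this
      omega
    have hghom : g.IsHomogeneous (a' + 1 + b) := by
      rw [← MvPolynomial.mem_homogeneousSubmodule]
      refine Submodule.sum_mem _ fun k _ => ?_
      rw [MvPolynomial.mem_homogeneousSubmodule, show a' + 1 + b = (b + 1) + a' by omega]
      exact (hX k).mul (hωk k)
    have hrad0 : (∑ k : Fin n, X k * ω {k} : S n) = 0 := by
      have h0 := congrFun hrad ∅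
      rw [contr_oneform_aux _ _ hform] at h0
      simpa [ofPoly, radial] using h0
    have hradL : ∀ l : Fin n, ∑ k : Fin n, X k * pderiv l (ω {k}) = -(ω {l}) := by
      intro l
      have hd := congrArg (pderiv l) hrad0
      rw [map_sum, map_zero] at hd
      rw [Finset.sum_congr rfl (fun k _ => (pderiv_mul (i := l) (f := X k) (g := ω {k}))),
        Finset.sum_add_distrib] at hd
      have h1 : ∑ k : Fin n, pderiv l (X k) * ω {k} = ω {l} := by
        rw [Finset.sum_eq_single l]
        · simp [pderiv_X_self]
        · intro k _ hkl
          rw [pderiv_X_of_ne hkl, zero_mul]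
        · simp
      rw [h1] at hd
      linear_combination hd
    have hcontrω : contr Xv ω = ofPoly g := contr_oneform_aux _ _ hform
    have hE2 : IsForm (extd ω) 2 := isForm_extd_aux _ _ hform
    have hA : IsForm (contr Xv (extd ω)) 1 := isForm_contr_aux _ _ _ hE2
    have hP : IsForm (extd (ofPoly g)) 1 :=
      isForm_extd_aux _ _ (isForm_ofPoly_aux g)
    have hL : IsForm (lieVF Xv ω) 1 := by
      intro I hI
      rw [lieVF, hcontrω]
      show contr Xv (extd ω) I + extd (ofPoly g) I = 0
      rw [hA I hI, hP I hI, add_zero]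
    -- expansion of the contraction of Xv with dω, at singletons
    have expand : ∀ k : Fin n, X (R := ℂ) k * contr Xv (extd ω) {k}
        = ∑ l : Fin n, (X k * Xv l * pderiv l (ω {k}) - X k * Xv l * pderiv k (ω {l})) := by
      intro k
      have e0 : contr Xv (extd ω) {k} = ∑ l ∈ ({k}ᶜ : Finset (Fin n)),
          ((-1 : S n) ^ (({k} : Finset (Fin n)).filter (fun j => j < l)).card) * Xv l *
            extd ω (insert l {k}) := rfl
      rw [e0, Finset.sum_congr rfl (fun l hl => pair_term_aux ω Xv k l
        (by simpa using Finset.mem_compl.mp hl))]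
      have hzk : Xv k * (pderiv k (ω {k}) - pderiv k (ω {k})) = 0 := by ring
      rw [show (∑ l ∈ ({k}ᶜ : Finset (Fin n)), Xv l * (pderiv l (ω {k}) - pderiv k (ω {l})))
          = ∑ l : Fin n, Xv l * (pderiv l (ω {k}) - pderiv k (ω {l})) by
        rw [← Finset.sum_compl_add_sum ({k} : Finset (Fin n))
          (fun l => Xv l * (pderiv l (ω {k}) - pderiv k (ω {l}))), Finset.sum_singleton, hzk,
          add_zero]]
      rw [Finset.mul_sum]
      exact Finset.sum_congr rfl fun l _ => by ring
    have keyA : ∑ k : Fin n, X (R := ℂ) k * contr Xv (extd ω) {k}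
        = -g - (a' : S n) * g := by
      rw [Finset.sum_congr rfl fun k _ => expand k]
      have e1 : ∑ k : Fin n, ∑ l : Fin n, (X (R := ℂ) k * Xv l * pderiv l (ω {k})
            - X k * Xv l * pderiv k (ω {l}))
          = (∑ l : Fin n, Xv l * ∑ k : Fin n, X k * pderiv l (ω {k}))
            - ∑ l : Fin n, Xv l * ∑ k : Fin n, X k * pderiv k (ω {l}) := by
        rw [Finset.sum_comm, ← Finset.sum_sub_distrib]
        refine Finset.sum_congr rfl fun l _ => ?_
        rw [Finset.sum_sub_distrib, Finset.mul_sum, Finset.mul_sum]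
        refine congrArg₂ (· - ·) ?_ ?_ <;> exact Finset.sum_congr rfl fun k _ => by ring
      rw [e1]
      have h2 : ∑ l : Fin n, Xv l * ∑ k : Fin n, X (R := ℂ) k * pderiv k (ω {l})
          = (a' : S n) * g := by
        rw [Finset.sum_congr rfl fun l _ => by rw [euler_aux _ _ (hωk l)], hg, Finset.mul_sum]
        exact Finset.sum_congr rfl fun l _ => by ring
      have h1 : ∑ l : Fin n, Xv l * ∑ k : Fin n, X (R := ℂ) k * pderiv l (ω {k}) = -g := by
        rw [Finset.sum_congr rfl fun l _ => by rw [hradL l], hg, ← Finset.sum_neg_distrib]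
        exact Finset.sum_congr rfl fun l _ => by ring
      rw [h1, h2]
    have keyL : ∑ k : Fin n, X (R := ℂ) k * (lieVF Xv ω) {k} = (b : S n) * g := by
      have hLk : ∀ k : Fin n, (lieVF Xv ω) {k} = contr Xv (extd ω) {k} + pderiv k g := by
        intro k
        rw [lieVF, hcontrω]
        show contr Xv (extd ω) {k} + extd (ofPoly g) {k} = _
        rw [extd_ofPoly_singleton_aux]
      rw [Finset.sum_congr rfl fun k _ => by rw [hLk k]]
      rw [Finset.sum_congr rfl fun k _ => (mul_add (X (R := ℂ) k) _ _),
        Finset.sum_add_distrib, keyA, euler_aux _ _ hghom]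
      push_cast
      ring
    have hKey : contr (radial n) (lieVF Xv ω) = ofPoly ((b : S n) * g) := by
      rw [contr_oneform_aux _ _ hL]
      have e : (∑ x : Fin n, radial n x * lieVF Xv ω {x}) = (b : S n) * g := by
        simpa [radial] using keyL
      rw [e]
    have hLHS : lieVF (f • Xv) ω
        = f • contr Xv (extd ω) + (f • extd (ofPoly g) + g • extd (ofPoly f)) := by
      rw [lieVF, contr_smul_aux, contr_smul_aux, hcontrω, smul_ofPoly_aux, extd_ofPoly_mul_aux]
    rw [hLHS, hKey, wedge_ofPoly_aux, lieVF, hcontrω]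
    funext I
    simp only [Pi.add_apply, Pi.smul_apply, smul_eq_mul, MvPolynomial.smul_eq_C_mul,
      div_eq_mul_inv, map_mul, MvPolynomial.C_eq_coe_nat]
    ring
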